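/- Rademacher-type lemma for running maxima: let f : ℝ × [0,∞) → ℝ be such that t ↦ f(x,t) is L-Lipschitz uniformly in x, ∂_t f(x,t) exists for every (x,t), and for every t there exists x(t) with f(x(t),t) = M(t) := sup_x f(x,t) < ∞. Then M is L-Lipschitz, hence differentiable almost everywhere, and M'(t) = ∂_t f(x(t), t) at every point t of differentiability of M. -/

import Mathlib

open Real MeasureTheory Set Filter Topology

theorem stmt_19 (f : ℝ → ℝ → ℝ) (L : ℝ) (hL : 0 ≤ L)
    (hlip : ∀ x : ℝ, ∀ t ∈ Ici (0:ℝ), ∀ s ∈ Ici (0:ℝ),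
      |f x t - f x s| ≤ L * |t - s|)
    (hdt : ∀ (x : ℝ), ∀ t ∈ Ici (0:ℝ), DifferentiableAt ℝ (f x) t)
    (X : ℝ → ℝ)
    (hX : ∀ t ∈ Ici (0:ℝ), ∀ x : ℝ, f x t ≤ f (X t) t) :
    (∀ t ∈ Ici (0:ℝ), ∀ s ∈ Ici (0:ℝ),
      |f (X t) t - f (X s) s| ≤ L * |t - s|) ∧
    (∀ᵐ t : ℝ, t ∈ Ioi (0:ℝ) →
      DifferentiableAt ℝ (fun τ => f (X τ) τ) t) ∧
    (∀ t ∈ Ioi (0:ℝ), DifferentiableAt ℝ (fun τ => f (X τ) τ) t →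
      deriv (fun τ => f (X τ) τ) t = deriv (f (X t)) t) := by
  set M : ℝ → ℝ := fun τ => f (X τ) τ with hM
  have part1 : ∀ t ∈ Ici (0:ℝ), ∀ s ∈ Ici (0:ℝ), |M t - M s| ≤ L * |t - s| := by
    intro t ht s hs
    rw [abs_sub_le_iff]
    constructor
    · have h1 : M t - M s ≤ f (X t) t - f (X t) s := by
        have := hX s hs (X t)
        simp only [hM]; linarith
      calc M t - M s ≤ f (X t) t - f (X t) s := h1
        _ ≤ |f (X t) t - f (X t) s| := le_abs_self _
        _ ≤ L * |t - s| := hlip (X t) t ht s hs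
    · have h1 : M s - M t ≤ f (X s) s - f (X s) t := by
        have := hX t ht (X s)
        simp only [hM]; linarith
      calc M s - M t ≤ f (X s) s - f (X s) t := h1
        _ ≤ |f (X s) s - f (X s) t| := le_abs_self _
        _ ≤ L * |s - t| := hlip (X s) s hs t ht
        _ = L * |t - s| := by rw [abs_sub_comm]
  refine ⟨part1, ?_, ?_⟩
  · -- define the Lipschitz extension g τ = M (max 0 τ)
    set g : ℝ → ℝ := fun τ => M (max 0 τ) with hg
    have hgl : LipschitzWith L.toNNReal g := by
      rw [lipschitzWith_iff_dist_le_mul]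
      intro a b
      have hmax : ∀ a b : ℝ, |max 0 a - max 0 b| ≤ |a - b| := by
        intro a b
        rw [max_comm 0 a, max_comm 0 b]
        exact abs_max_sub_max_le_abs a b 0
      have h1 := part1 (max 0 a) (Set.mem_Ici.2 (le_max_left _ _)) (max 0 b) (Set.mem_Ici.2 (le_max_left _ _))
      simp only [Real.dist_eq, Real.coe_toNNReal L hL, hg]
      calc |M (max 0 a) - M (max 0 b)| ≤ L * |max 0 a - max 0 b| := h1
        _ ≤ L * |a - b| := by
          exact mul_le_mul_of_nonneg_left (hmax a b) hL
    have := hgl.ae_differentiableAt (μ := volume)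
    filter_upwards [this] with t hdg ht
    have heq : g =ᶠ[𝓝 t] M := by
      filter_upwards [Ioi_mem_nhds ht] with τ hτ
      simp [hg, max_eq_right (le_of_lt (Set.mem_Ioi.1 hτ))]
    exact (heq.differentiableAt_iff).1 hdg
  · intro t ht hdM
    have ht0 : t ∈ Ici (0:ℝ) := Set.mem_Ici.2 (le_of_lt (Set.mem_Ioi.1 ht))
    have hdg : DifferentiableAt ℝ (f (X t)) t := hdt (X t) t ht0
    have hmin : IsLocalMin (fun τ => M τ - f (X t) τ) t := by
      have h0 : M t - f (X t) t = 0 := by simp [hM]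
      rw [IsLocalMin, IsMinFilter]
      filter_upwards [Ici_mem_nhds (show (0:ℝ) < t from ht)] with τ hτ
      have := hX τ hτ (X t)
      simp only [h0, hM]; linarith
    have hd0 : deriv (fun τ => M τ - f (X t) τ) t = 0 := hmin.deriv_eq_zero
    rw [deriv_fun_sub hdM hdg] at hd0
    linarith
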